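/- arXiv:math/0306292 — 4 statements merged into one kernel-verified Lean document; each statement's English description precedes it below -/
import Mathlib

section
/- There exists a compact topological group X and a continuous group automorphism T : X → X such that for every n ≥ 1 the set F_n(T) = {x ∈ X : T^n(x) = x} is finite, and (1/n)·log|F_n(T)| → ∞ as n → ∞. -/
open Filter Real

/-- There is a compact topological group `X` and a continuous group automorphism
`T : X → X` such that every `Fₙ(T) = {x | Tⁿ x = x}` is finite and
`(1/n) log |Fₙ(T)| → ∞`. -/
theorem many_periodic_points :
    ∃ (X : Type) (_ : TopologicalSpace X) (_ : Group X) (_ : IsTopologicalGroup X)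
      (_ : CompactSpace X) (T : X ≃* X),
      Continuous T ∧ Continuous T.symm ∧
      (∀ n : ℕ, 1 ≤ n → Set.Finite {x : X | (⇑T)^[n] x = x}) ∧
      Filter.Tendsto
        (fun n : ℕ => Real.log (Nat.card {x : X | (⇑T)^[n] x = x}) / n)
        Filter.atTop Filter.atTop := by
  -- choose primes q i ≡ 1 mod (i+1), q i > 2^((i+1)*(i+1))
  have hex : ∀ i : ℕ, ∃ p : ℕ, p.Prime ∧ 2 ^ ((i + 1) * (i + 1)) < p ∧ p ≡ 1 [MOD (i + 1)] :=
    fun i => Nat.exists_prime_gt_modEq_one _ (Nat.succ_ne_zero i)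
  choose q hq hqbig hqmod using hex
  haveI hfact : ∀ i, Fact (q i).Prime := fun i => ⟨hq i⟩
  haveI : ∀ i, NeZero (q i) := fun i => ⟨(hq i).pos.ne'⟩
  -- a unit of order i+1
  have hdvd : ∀ i, (i + 1) ∣ q i - 1 := by
    intro i
    exact (Nat.modEq_iff_dvd' (by have := (hq i).one_lt; omega)).1 (hqmod i).symm
  have hex2 : ∀ i, ∃ g : (ZMod (q i))ˣ, orderOf g = i + 1 := by
    intro i
    obtain ⟨g0, hg0⟩ := IsCyclic.exists_ofOrder_eq_natCard (α := (ZMod (q i))ˣ)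
    have hcard : Nat.card (ZMod (q i))ˣ = q i - 1 := by
      rw [Nat.card_eq_fintype_card, ZMod.card_units_eq_totient, Nat.totient_prime (hq i)]
    refine ⟨g0 ^ (orderOf g0 / (i + 1)), orderOf_pow_orderOf_div ?_ ?_⟩
    · rw [hg0, hcard]; have := (hq i).one_lt; omega
    · rw [hg0, hcard]; exact hdvd i
  choose g hg using hex2
  -- the factor groups and the automorphism
  set G : ℕ → Type := fun i => Multiplicative (ZMod (q i)) with hG
  letI : ∀ i, CommGroup (G i) := fun i => Multiplicative.commGroup
  let e : ∀ i, G i ≃* G i := fun i =>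
    AddEquiv.toMultiplicative (DistribMulAction.toAddAut (ZMod (q i))ˣ (ZMod (q i)) (g i))
  have he : ∀ i (y : G i),
      e i y = Multiplicative.ofAdd ((g i : ZMod (q i)) * Multiplicative.toAdd y) := fun i y => rfl
  -- iterates on each factor
  have hfac : ∀ i n (y : G i),
      (⇑(e i))^[n] y =
        Multiplicative.ofAdd (((g i : ZMod (q i))) ^ n * Multiplicative.toAdd y) := by
    intro i n
    induction n with
    | zero => intro y; simp
    | succ n ih =>
      intro y
      rw [Function.iterate_succ_apply', ih, he]
      simp [pow_succ, mul_comm, mul_assoc, mul_left_comm]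
  -- iterates on the product
  have hiter : ∀ n (x : ∀ i, G i) i,
      (⇑(MulEquiv.piCongrRight e))^[n] x i = (⇑(e i))^[n] (x i) := by
    intro n
    induction n with
    | zero => intro x i; rfl
    | succ n ih =>
      intro x i
      rw [Function.iterate_succ_apply, Function.iterate_succ_apply]
      exact ih _ i
  -- membership characterization
  have hmem : ∀ n (x : ∀ i, G i),
      (⇑(MulEquiv.piCongrRight e))^[n] x = x ↔
        ∀ i, ((g i : ZMod (q i))) ^ n * Multiplicative.toAdd (x i)
          = Multiplicative.toAdd (x i) := by
    intro n x
    rw [funext_iff]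
    apply forall_congr'
    intro i
    rw [hiter, hfac]
    constructor
    · intro h
      have := congrArg Multiplicative.toAdd h
      simpa using this
    · intro h
      have := congrArg Multiplicative.ofAdd h
      simpa using this
  -- coordinates at non-divisors are forced to be 1
  have hforce : ∀ n (x : ∀ i, G i), (⇑(MulEquiv.piCongrRight e))^[n] x = x →
      ∀ i, ¬ ((i + 1) ∣ n) → x i = 1 := by
    intro n x hx i hi
    have h := (hmem n x).1 hx i
    have hg1 : (g i) ^ n ≠ 1 := by
      intro hcon
      exact hi (by rw [← hg i]; exact orderOf_dvd_of_pow_eq_one hcon)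
    have hc : ((g i : ZMod (q i))) ^ n ≠ 1 := by
      intro hcon
      apply hg1
      ext
      push_cast
      simpa using hcon
    have hv : Multiplicative.toAdd (x i) = 0 := by
      have h2 : (((g i : ZMod (q i))) ^ n - 1) * Multiplicative.toAdd (x i) = 0 := by
        rw [sub_mul, one_mul, h, sub_self]
      rcases mul_eq_zero.1 h2 with h3 | h3
      · exact absurd (by linear_combination h3) hc
      · exact h3
    have := congrArg Multiplicative.ofAdd hv
    simpa using this
  -- the big fixed coordinate: i = n-1 gives a full factor of fixed points
  have hfull : ∀ n, 1 ≤ n → ∀ v : ZMod (q (n - 1)),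
      (⇑(MulEquiv.piCongrRight e))^[n]
        (Function.update (1 : ∀ i, G i) (n - 1) (Multiplicative.ofAdd v))
        = Function.update (1 : ∀ i, G i) (n - 1) (Multiplicative.ofAdd v) := by
    intro n hn v
    rw [hmem]
    intro i
    by_cases hi : i = n - 1
    · subst hi
      rw [Function.update_self]
      have h1 : (g (n - 1)) ^ n = 1 := by
        rw [← orderOf_dvd_iff_pow_eq_one, hg]
        exact ⟨1, by omega⟩
      have hc : ((g (n - 1) : ZMod (q (n - 1)))) ^ n = 1 := by
        rw [← Units.val_pow_eq_pow_val, h1, Units.val_one]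
      rw [hc, one_mul]
    · rw [Function.update_of_ne hi]
      simp
  letI ts : ∀ i, TopologicalSpace (G i) := fun _ => ⊥
  haveI dt : ∀ i, DiscreteTopology (G i) := fun i => ⟨rfl⟩
  haveI htg : ∀ i, IsTopologicalGroup (G i) := fun i =>
    { continuous_mul := continuous_of_discreteTopology
      continuous_inv := continuous_of_discreteTopology }
  haveI hfin : ∀ i, Finite (G i) := fun i => inferInstanceAs (Finite (Multiplicative (ZMod (q i))))
  refine ⟨∀ i, G i, inferInstance, inferInstance, inferInstance, inferInstance,
    MulEquiv.piCongrRight e, ?_, ?_, ?_, ?_⟩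
  · exact continuous_pi fun i => continuous_of_discreteTopology.comp (continuous_apply i)
  · exact continuous_pi fun i => continuous_of_discreteTopology.comp (continuous_apply i)
  · -- finiteness
    intro n hn
    haveI : Finite ↥{x : ∀ i, G i | (⇑(MulEquiv.piCongrRight e))^[n] x = x} := by
      apply Finite.of_injective
        (fun x : ↥{x : ∀ i, G i | (⇑(MulEquiv.piCongrRight e))^[n] x = x} =>
          (fun j : Fin n => x.1 j : ∀ j : Fin n, G j))
      intro x y hxy
      ext i
      by_cases hi : i < n
      · exact congrFun hxy ⟨i, hi⟩
      · have hnd : ¬ ((i + 1) ∣ n) := by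
          intro h
          have := Nat.le_of_dvd (by omega) h
          omega
        rw [hforce n x.1 x.2 i hnd, hforce n y.1 y.2 i hnd]
    exact Set.toFinite _
  · -- growth
    have hfinset : ∀ n, 1 ≤ n →
        Finite ↥{x : ∀ i, G i | (⇑(MulEquiv.piCongrRight e))^[n] x = x} := by
      intro n hn
      apply Finite.of_injective
        (fun x : ↥{x : ∀ i, G i | (⇑(MulEquiv.piCongrRight e))^[n] x = x} =>
          (fun j : Fin n => x.1 j : ∀ j : Fin n, G j))
      intro x y hxy
      ext i
      by_cases hi : i < n
      · exact congrFun hxy ⟨i, hi⟩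
      · have hnd : ¬ ((i + 1) ∣ n) := by
          intro h
          have := Nat.le_of_dvd (by omega) h
          omega
        rw [hforce n x.1 x.2 i hnd, hforce n y.1 y.2 i hnd]
    have hcardle : ∀ n : ℕ, 1 ≤ n →
        q (n - 1) ≤ Nat.card ↥{x : ∀ i, G i | (⇑(MulEquiv.piCongrRight e))^[n] x = x} := by
      intro n hn
      haveI := hfinset n hn
      have hinj : Function.Injective
          (fun v : ZMod (q (n - 1)) =>
            (⟨Function.update (1 : ∀ i, G i) (n - 1) (Multiplicative.ofAdd v),
              hfull n hn v⟩ :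
              ↥{x : ∀ i, G i | (⇑(MulEquiv.piCongrRight e))^[n] x = x})) := by
        intro v w hvw
        have h := congrFun (congrArg Subtype.val hvw) (n - 1)
        simp only [Function.update_self] at h
        simpa using h
      calc q (n - 1) = Nat.card (ZMod (q (n - 1))) := (Nat.card_zmod _).symm
        _ ≤ _ := Nat.card_le_card_of_injective _ hinj
    have hlow : ∀ n : ℕ, 1 ≤ n → (n : ℝ) * Real.log 2 ≤
        Real.log (Nat.card ↥{x : ∀ i, G i | (⇑(MulEquiv.piCongrRight e))^[n] x = x}) / n := by
      intro n hn
      have h1 : (2 : ℝ) ^ (n * n) ≤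
          (Nat.card ↥{x : ∀ i, G i | (⇑(MulEquiv.piCongrRight e))^[n] x = x} : ℝ) := by
        have h3 : (n - 1 + 1) * (n - 1 + 1) = n * n := by rw [Nat.sub_add_cancel hn]
        have h5 := le_trans (Nat.le_of_lt (hqbig (n - 1))) (hcardle n hn)
        rw [h3] at h5
        exact_mod_cast h5
      have hpos : (0 : ℝ) < 2 ^ (n * n) := by positivity
      have hlog : ((n * n : ℕ) : ℝ) * Real.log 2 ≤
          Real.log (Nat.card ↥{x : ∀ i, G i | (⇑(MulEquiv.piCongrRight e))^[n] x = x}) := by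
        calc ((n * n : ℕ) : ℝ) * Real.log 2 = Real.log ((2 : ℝ) ^ (n * n)) := by
              rw [Real.log_pow]
          _ ≤ _ := Real.log_le_log hpos h1
      have hn' : (0 : ℝ) < n := by exact_mod_cast hn
      rw [le_div_iff₀ hn']
      calc (n : ℝ) * Real.log 2 * n = ((n * n : ℕ) : ℝ) * Real.log 2 := by
            push_cast; ring
        _ ≤ _ := hlog
    apply tendsto_atTop_mono' _ _
      (Tendsto.atTop_mul_const (Real.log_pos one_lt_two) tendsto_natCast_atTop_atTop)
    filter_upwards [eventually_ge_atTop 1] with n hn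
    exact hlow n hn
end

section
/- Let X be a set and T : X → X a map such that for every n ≥ 1 the set {x ∈ X : T^n(x) = x} is finite; write F_n(T) for its cardinality and L_n(T) for the number of points of X whose least period under T is exactly n. Then for any real C with 0 < C < ∞: (1/n)·log F_n(T) → C as n → ∞ if and only if (1/n)·log L_n(T) → C as n → ∞. -/
open Function Filter

lemma card_least_le {X : Type*} (T : X → X)
    (hfin : ∀ n : ℕ, 1 ≤ n → Set.Finite {x : X | T^[n] x = x}) (n : ℕ) (hn : 1 ≤ n) :
    Nat.card {x : X | Function.minimalPeriod T x = n} ≤ Nat.card {x : X | T^[n] x = x} := by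
  rw [Nat.card_coe_set_eq, Nat.card_coe_set_eq]
  refine Set.ncard_le_ncard ?_ (hfin n hn)
  intro x hx
  simp only [Set.mem_setOf_eq] at *
  rw [← hx]; exact Function.iterate_minimalPeriod

lemma card_fix_le {X : Type*} (T : X → X)
    (hfin : ∀ n : ℕ, 1 ≤ n → Set.Finite {x : X | T^[n] x = x}) (n : ℕ) (hn : 1 ≤ n) :
    Nat.card {x : X | T^[n] x = x} ≤
      ∑ d ∈ n.divisors, Nat.card {x : X | Function.minimalPeriod T x = d} := by
  classical
  have hP : ∀ d : ℕ, 1 ≤ d → Set.Finite {x : X | Function.minimalPeriod T x = d} := by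
    intro d hd
    refine (hfin d hd).subset ?_
    intro x hx
    simp only [Set.mem_setOf_eq] at *
    rw [← hx]; exact Function.iterate_minimalPeriod
  set t : ℕ → Finset X := fun d => if hd : 1 ≤ d then (hP d hd).toFinset else ∅ with ht
  rw [Nat.card_coe_set_eq, Set.ncard_eq_toFinset_card _ (hfin n hn)]
  have hsub : (hfin n hn).toFinset ⊆ n.divisors.biUnion t := by
    intro x hx
    rw [Set.Finite.mem_toFinset] at hx
    have hper : Function.IsPeriodicPt T n x := hx
    have hpos : 0 < Function.minimalPeriod T x := hper.minimalPeriod_pos hn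
    refine Finset.mem_biUnion.2 ⟨Function.minimalPeriod T x, ?_, ?_⟩
    · exact Nat.mem_divisors.2 ⟨hper.minimalPeriod_dvd, by omega⟩
    · have hpos1 : 1 ≤ Function.minimalPeriod T x := Nat.one_le_iff_ne_zero.mpr (by omega)
      show x ∈ if hd : 1 ≤ Function.minimalPeriod T x then (hP _ hd).toFinset else ∅
      rw [dif_pos hpos1, Set.Finite.mem_toFinset]
      exact rfl
  calc (hfin n hn).toFinset.card ≤ (n.divisors.biUnion t).card := Finset.card_le_card hsub
    _ ≤ ∑ d ∈ n.divisors, (t d).card := Finset.card_biUnion_le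
    _ = ∑ d ∈ n.divisors, Nat.card {x : X | Function.minimalPeriod T x = d} := by
        refine Finset.sum_congr rfl fun d hd => ?_
        have hd1 : 1 ≤ d := Nat.pos_of_mem_divisors hd
        rw [Nat.card_coe_set_eq, Set.ncard_eq_toFinset_card _ (hP d hd1)]
        simp [ht, hd1]

lemma aux_log_add_div (A : ℝ) (hA : 0 ≤ A) :
    Tendsto (fun n : ℕ => Real.log (A + n) / n) atTop (nhds 0) := by
  have h1 : Tendsto (fun n : ℕ => Real.log n / n) atTop (nhds 0) :=
    (Real.isLittleO_log_id_atTop.tendsto_div_nhds_zero).comp tendsto_natCast_atTop_atTop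
  have h2 : Tendsto (fun n : ℕ => Real.log (A + 1) / n + Real.log n / n) atTop (nhds 0) := by
    simpa using (tendsto_const_div_atTop_nhds_zero_nat (Real.log (A+1))).add h1
  refine tendsto_of_tendsto_of_tendsto_of_le_of_le' tendsto_const_nhds h2 ?_ ?_
  · filter_upwards [eventually_ge_atTop 1] with n hn
    have h1 : (1:ℝ) ≤ A + n := by
      have : (1:ℝ) ≤ (n:ℝ) := by exact_mod_cast hn
      linarith
    have hn0 : (0:ℝ) ≤ (n:ℝ) := Nat.cast_nonneg n
    exact div_nonneg (Real.log_nonneg h1) hn0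
  · filter_upwards [eventually_ge_atTop 1] with n hn
    have hn1 : (1:ℝ) ≤ (n:ℝ) := by exact_mod_cast hn
    have hle : A + n ≤ (A + 1) * n := by nlinarith
    have h0 : (0:ℝ) < A + n := by linarith
    have := Real.log_le_log h0 hle
    rw [Real.log_mul (by linarith) (by linarith)] at this
    have hn0 : (0:ℝ) < n := by linarith
    rw [← add_div]
    exact div_le_div_of_nonneg_right this hn0.le

lemma aux_exp_decay (B δ : ℝ) (hδ : 0 < δ) :
    Tendsto (fun n : ℕ => (B + n) * Real.exp (-(δ * n))) atTop (nhds 0) := by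
  have h1 : Tendsto (fun x : ℝ => (B + x) * Real.exp (-(δ * x))) atTop (nhds 0) := by
    have ha : Tendsto (fun x : ℝ => B * Real.exp (-(δ * x))) atTop (nhds 0) := by
      have := (Real.tendsto_exp_neg_atTop_nhds_zero).comp
        (tendsto_id.const_mul_atTop hδ)
      simpa using this.const_mul B
    have hb : Tendsto (fun x : ℝ => x * Real.exp (-(δ * x))) atTop (nhds 0) := by
      have h := (Real.tendsto_pow_mul_exp_neg_atTop_nhds_zero 1).comp
        (tendsto_id.const_mul_atTop hδ : Tendsto (fun x : ℝ => δ * x) atTop atTop)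
      have h' := h.const_mul (1/δ)
      simp only [Function.comp, pow_one, mul_zero] at h'
      refine h'.congr fun x => ?_
      field_simp
    have := ha.add hb
    simp only [add_zero] at this
    exact this.congr fun x => by ring
  exact h1.comp tendsto_natCast_atTop_atTop

-- Direction ⇐ : from L to F
lemma abstract_L_to_F (F L : ℕ → ℕ)
    (hLF : ∀ n, 1 ≤ n → L n ≤ F n)
    (hFsum : ∀ n, 1 ≤ n → F n ≤ ∑ d ∈ n.divisors, L d)
    (C : ℝ) (hC : 0 < C)
    (hl : Tendsto (fun n : ℕ => Real.log (L n) / n) atTop (nhds C)) :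
    Tendsto (fun n : ℕ => Real.log (F n) / n) atTop (nhds C) := by
  rw [Metric.tendsto_atTop] at hl ⊢
  intro ε hε
  set ε' : ℝ := min (ε/2) (C/2) with hε'def
  have hε' : 0 < ε' := lt_min (by linarith) (by linarith)
  have hε'ε : ε' ≤ ε/2 := min_le_left _ _
  have hε'C : ε' ≤ C/2 := min_le_right _ _
  obtain ⟨N₀, hN₀⟩ := hl ε' hε'
  set N : ℕ := max N₀ 1 with hNdef
  have hN1 : 1 ≤ N := le_max_right _ _
  -- basic bounds for n ≥ N
  have hLpos : ∀ n, N ≤ n → 1 ≤ L n := by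
    intro n hn
    have h := hN₀ n (le_trans (le_max_left _ _) hn)
    rw [Real.dist_eq, abs_sub_lt_iff] at h
    by_contra hL
    have hL0 : L n = 0 := by omega
    rw [hL0] at h
    simp only [Nat.cast_zero, Real.log_zero, zero_div] at h
    linarith
  have hLub : ∀ n, N ≤ n → (L n : ℝ) ≤ Real.exp ((C + ε') * n) := by
    intro n hn
    have h := hN₀ n (le_trans (le_max_left _ _) hn)
    rw [Real.dist_eq, abs_sub_lt_iff] at h
    have hn0 : (0:ℝ) < n := by
      have : 1 ≤ n := le_trans hN1 hn
      exact_mod_cast this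
    have hlog : Real.log (L n) < (C + ε') * n := by
      have := h.1
      rw [div_sub' (ne_of_gt hn0)] at this
      rw [div_lt_iff₀ hn0] at this
      nlinarith
    have hLn : (0:ℝ) < (L n : ℝ) := by exact_mod_cast hLpos n hn
    calc (L n : ℝ) = Real.exp (Real.log (L n)) := (Real.exp_log hLn).symm
      _ ≤ Real.exp ((C + ε') * n) := Real.exp_le_exp.2 hlog.le
  have hLlb : ∀ n, N ≤ n → (C - ε') * n < Real.log (L n) := by
    intro n hn
    have h := hN₀ n (le_trans (le_max_left _ _) hn)
    rw [Real.dist_eq, abs_sub_lt_iff] at h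
    have hn0 : (0:ℝ) < n := by
      have : 1 ≤ n := le_trans hN1 hn
      exact_mod_cast this
    have := h.2
    rw [sub_div' (ne_of_gt hn0), div_lt_iff₀ hn0] at this
    nlinarith
  set A : ℝ := ∑ d ∈ Finset.range N, (L d : ℝ) with hAdef
  have hA0 : 0 ≤ A := Finset.sum_nonneg fun d _ => Nat.cast_nonneg _
  have claim : ∀ n, N ≤ n → (F n : ℝ) ≤ A + n * Real.exp ((C + ε') * n) := by
    intro n hn
    have hn1 : 1 ≤ n := le_trans hN1 hn
    have h1 : (F n : ℝ) ≤ ∑ d ∈ n.divisors, (L d : ℝ) := by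
      have := hFsum n hn1
      calc (F n : ℝ) ≤ ((∑ d ∈ n.divisors, L d : ℕ) : ℝ) := by exact_mod_cast this
        _ = ∑ d ∈ n.divisors, (L d : ℝ) := by push_cast; ring
    have hsub : n.divisors ⊆ Finset.range N ∪ Finset.Icc N n := by
      intro d hd
      have hd1 : 1 ≤ d := Nat.pos_of_mem_divisors hd
      have hdn : d ≤ n := Nat.le_of_dvd (by omega) (Nat.dvd_of_mem_divisors hd)
      rcases lt_or_ge d N with h | h
      · exact Finset.mem_union_left _ (Finset.mem_range.2 h)
      · exact Finset.mem_union_right _ (Finset.mem_Icc.2 ⟨h, hdn⟩)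
    have hdisj : Disjoint (Finset.range N) (Finset.Icc N n) := by
      rw [Finset.disjoint_left]
      intro d hd hd'
      rw [Finset.mem_range] at hd
      rw [Finset.mem_Icc] at hd'
      omega
    have h2 : ∑ d ∈ n.divisors, (L d : ℝ) ≤ A + ∑ d ∈ Finset.Icc N n, (L d : ℝ) := by
      calc ∑ d ∈ n.divisors, (L d : ℝ)
          ≤ ∑ d ∈ Finset.range N ∪ Finset.Icc N n, (L d : ℝ) :=
            Finset.sum_le_sum_of_subset_of_nonneg hsub (fun i _ _ => Nat.cast_nonneg _)
        _ = A + ∑ d ∈ Finset.Icc N n, (L d : ℝ) := Finset.sum_union hdisj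
    have h3 : ∑ d ∈ Finset.Icc N n, (L d : ℝ) ≤ n * Real.exp ((C + ε') * n) := by
      have hbd : ∀ d ∈ Finset.Icc N n, (L d : ℝ) ≤ Real.exp ((C + ε') * n) := by
        intro d hd
        rw [Finset.mem_Icc] at hd
        calc (L d : ℝ) ≤ Real.exp ((C + ε') * d) := hLub d hd.1
          _ ≤ Real.exp ((C + ε') * n) := by
            apply Real.exp_le_exp.2
            have : (d:ℝ) ≤ (n:ℝ) := by exact_mod_cast hd.2
            nlinarith
      calc ∑ d ∈ Finset.Icc N n, (L d : ℝ)
          ≤ ∑ _d ∈ Finset.Icc N n, Real.exp ((C + ε') * n) := Finset.sum_le_sum hbd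
        _ = (Finset.Icc N n).card * Real.exp ((C + ε') * n) := by
            rw [Finset.sum_const, nsmul_eq_mul]
        _ ≤ n * Real.exp ((C + ε') * n) := by
            apply mul_le_mul_of_nonneg_right _ (Real.exp_nonneg _)
            have : (Finset.Icc N n).card = n + 1 - N := Nat.card_Icc N n
            have hcard : (Finset.Icc N n).card ≤ n := by omega
            exact_mod_cast hcard
    linarith
  -- get N₂ for log(A+n)/n small
  have hlog0 := aux_log_add_div A hA0
  rw [Metric.tendsto_atTop] at hlog0
  obtain ⟨N₂, hN₂⟩ := hlog0 (ε/2) (by linarith)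
  refine ⟨max N N₂, fun n hn => ?_⟩
  have hnN : N ≤ n := le_trans (le_max_left _ _) hn
  have hnN₂ : N₂ ≤ n := le_trans (le_max_right _ _) hn
  have hn1 : 1 ≤ n := le_trans hN1 hnN
  have hn0 : (0:ℝ) < n := by exact_mod_cast hn1
  have hL1 : (1:ℝ) ≤ (L n : ℝ) := by exact_mod_cast hLpos n hnN
  have hF1 : (1:ℝ) ≤ (F n : ℝ) := by
    have := hLF n hn1
    have := hLpos n hnN
    have : 1 ≤ F n := by omega
    exact_mod_cast this
  rw [Real.dist_eq, abs_sub_lt_iff]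
  constructor
  · -- upper bound
    have hle := claim n hnN
    have hexp1 : (1:ℝ) ≤ Real.exp ((C + ε') * n) := by
      rw [Real.one_le_exp_iff]
      positivity
    have h2 : (F n : ℝ) ≤ (A + n) * Real.exp ((C + ε') * n) := by nlinarith
    have hlogle : Real.log (F n) ≤ Real.log (A + n) + (C + ε') * n := by
      calc Real.log (F n) ≤ Real.log ((A + n) * Real.exp ((C + ε') * n)) :=
            Real.log_le_log (by linarith) h2
        _ = Real.log (A + n) + (C + ε') * n := by
            rw [Real.log_mul (by linarith) (Real.exp_ne_zero _), Real.log_exp]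
    have hsmall := hN₂ n hnN₂
    rw [Real.dist_eq, sub_zero, abs_lt] at hsmall
    have : Real.log (F n) / n ≤ Real.log (A + n) / n + (C + ε') := by
      rw [div_add' _ _ _ (ne_of_gt hn0), div_le_div_iff_of_pos_right hn0]
      nlinarith
    have h3 : Real.log (A + n) / n < ε / 2 := hsmall.2
    linarith
  · -- lower bound
    have hlb := hLlb n hnN
    have hlog_mono : Real.log (L n) ≤ Real.log (F n) := by
      apply Real.log_le_log (by linarith)
      exact_mod_cast hLF n hn1
    have : (C - ε') * n < Real.log (F n) := lt_of_lt_of_le hlb hlog_mono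
    have h4 : C - ε' < Real.log (F n) / n := by
      rw [lt_div_iff₀ hn0]
      nlinarith
    linarith

-- Direction ⇒ : from F to L
lemma abstract_F_to_L (F L : ℕ → ℕ)
    (hLF : ∀ n, 1 ≤ n → L n ≤ F n)
    (hFsum : ∀ n, 1 ≤ n → F n ≤ ∑ d ∈ n.divisors, L d)
    (C : ℝ) (hC : 0 < C)
    (hf : Tendsto (fun n : ℕ => Real.log (F n) / n) atTop (nhds C)) :
    Tendsto (fun n : ℕ => Real.log (L n) / n) atTop (nhds C) := by
  rw [Metric.tendsto_atTop] at hf ⊢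
  intro ε hε
  set ε₁ : ℝ := min (ε/2) (C/8) with hε₁def
  have hε₁ : 0 < ε₁ := lt_min (by linarith) (by linarith)
  have hε₁ε : ε₁ ≤ ε/2 := min_le_left _ _
  have hε₁C : ε₁ ≤ C/8 := min_le_right _ _
  obtain ⟨N₀, hN₀⟩ := hf ε₁ hε₁
  set N : ℕ := max N₀ 1 with hNdef
  have hN1 : 1 ≤ N := le_max_right _ _
  have hFpos : ∀ n, N ≤ n → 1 ≤ F n := by
    intro n hn
    have h := hN₀ n (le_trans (le_max_left _ _) hn)
    rw [Real.dist_eq, abs_sub_lt_iff] at h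
    by_contra hF
    have hF0 : F n = 0 := by omega
    rw [hF0] at h
    simp only [Nat.cast_zero, Real.log_zero, zero_div] at h
    linarith
  have hFub : ∀ n, N ≤ n → (F n : ℝ) ≤ Real.exp ((C + ε₁) * n) := by
    intro n hn
    have h := hN₀ n (le_trans (le_max_left _ _) hn)
    rw [Real.dist_eq, abs_sub_lt_iff] at h
    have hn0 : (0:ℝ) < n := by
      have : 1 ≤ n := le_trans hN1 hn
      exact_mod_cast this
    have hlog : Real.log (F n) < (C + ε₁) * n := by
      have := h.1
      rw [div_sub' (ne_of_gt hn0), div_lt_iff₀ hn0] at this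
      nlinarith
    have hFn : (0:ℝ) < (F n : ℝ) := by exact_mod_cast hFpos n hn
    calc (F n : ℝ) = Real.exp (Real.log (F n)) := (Real.exp_log hFn).symm
      _ ≤ Real.exp ((C + ε₁) * n) := Real.exp_le_exp.2 hlog.le
  have hFlb : ∀ n, N ≤ n → Real.exp ((C - ε₁) * n) ≤ (F n : ℝ) := by
    intro n hn
    have h := hN₀ n (le_trans (le_max_left _ _) hn)
    rw [Real.dist_eq, abs_sub_lt_iff] at h
    have hn0 : (0:ℝ) < n := by
      have : 1 ≤ n := le_trans hN1 hn
      exact_mod_cast this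
    have hlog : (C - ε₁) * n ≤ Real.log (F n) := by
      have := h.2
      rw [sub_div' (ne_of_gt hn0), div_lt_iff₀ hn0] at this
      nlinarith
    have hFn : (0:ℝ) < (F n : ℝ) := by exact_mod_cast hFpos n hn
    calc Real.exp ((C - ε₁) * n) ≤ Real.exp (Real.log (F n)) := Real.exp_le_exp.2 hlog
      _ = (F n : ℝ) := Real.exp_log hFn
  set B : ℝ := ∑ d ∈ Finset.range N, (L d : ℝ) with hBdef
  have hB0 : 0 ≤ B := Finset.sum_nonneg fun d _ => Nat.cast_nonneg _
  -- F n ≤ L n + (sum over proper divisors)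
  have hFsum' : ∀ n, 1 ≤ n →
      (F n : ℝ) ≤ (L n : ℝ) + ∑ d ∈ n.properDivisors, (L d : ℝ) := by
    intro n hn
    have h := hFsum n hn
    have hins : insert n n.properDivisors = n.divisors :=
      Nat.insert_self_properDivisors (by omega)
    have hnot : n ∉ n.properDivisors := by simp [Nat.mem_properDivisors]
    have : (∑ d ∈ n.divisors, (L d : ℝ)) = (L n : ℝ) + ∑ d ∈ n.properDivisors, (L d : ℝ) := by
      rw [← hins, Finset.sum_insert hnot]
    calc (F n : ℝ) ≤ ∑ d ∈ n.divisors, (L d : ℝ) := by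
          exact_mod_cast h
      _ = (L n : ℝ) + ∑ d ∈ n.properDivisors, (L d : ℝ) := this
  have claim : ∀ n, 2 * N ≤ n →
      (F n : ℝ) ≤ (L n : ℝ) + B + n * Real.exp ((C + ε₁) * (n / 2 : ℝ)) := by
    intro n hn
    have hn1 : 1 ≤ n := by omega
    have hsub : n.properDivisors ⊆ Finset.range N ∪ Finset.Icc N (n / 2) := by
      intro d hd
      rw [Nat.mem_properDivisors] at hd
      obtain ⟨hdvd, hdlt⟩ := hd
      have hd1 : 1 ≤ d := Nat.pos_of_dvd_of_pos hdvd (by omega)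
      have h2d : 2 * d ≤ n := by
        obtain ⟨k, hk⟩ := hdvd
        have hk2 : 2 ≤ k := by nlinarith
        nlinarith
      have hdhalf : d ≤ n / 2 := by omega
      rcases lt_or_ge d N with h | h
      · exact Finset.mem_union_left _ (Finset.mem_range.2 h)
      · exact Finset.mem_union_right _ (Finset.mem_Icc.2 ⟨h, hdhalf⟩)
    have hdisj : Disjoint (Finset.range N) (Finset.Icc N (n / 2)) := by
      rw [Finset.disjoint_left]
      intro d hd hd'
      rw [Finset.mem_range] at hd
      rw [Finset.mem_Icc] at hd'
      omega
    have h2 : ∑ d ∈ n.properDivisors, (L d : ℝ)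
        ≤ B + ∑ d ∈ Finset.Icc N (n / 2), (L d : ℝ) := by
      calc ∑ d ∈ n.properDivisors, (L d : ℝ)
          ≤ ∑ d ∈ Finset.range N ∪ Finset.Icc N (n / 2), (L d : ℝ) :=
            Finset.sum_le_sum_of_subset_of_nonneg hsub (fun i _ _ => Nat.cast_nonneg _)
        _ = B + ∑ d ∈ Finset.Icc N (n / 2), (L d : ℝ) := Finset.sum_union hdisj
    have h3 : ∑ d ∈ Finset.Icc N (n / 2), (L d : ℝ)
        ≤ n * Real.exp ((C + ε₁) * (n / 2 : ℝ)) := by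
      have hbd : ∀ d ∈ Finset.Icc N (n / 2), (L d : ℝ) ≤ Real.exp ((C + ε₁) * (n / 2 : ℝ)) := by
        intro d hd
        rw [Finset.mem_Icc] at hd
        have hd1 : 1 ≤ d := le_trans hN1 hd.1
        have hLd : (L d : ℝ) ≤ (F d : ℝ) := by exact_mod_cast hLF d hd1
        calc (L d : ℝ) ≤ (F d : ℝ) := hLd
          _ ≤ Real.exp ((C + ε₁) * d) := hFub d hd.1
          _ ≤ Real.exp ((C + ε₁) * (n / 2 : ℝ)) := by
              apply Real.exp_le_exp.2
              have hcast : (d : ℝ) ≤ (n : ℝ) / 2 := by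
                have h1 : (d : ℝ) ≤ ((n / 2 : ℕ) : ℝ) := by exact_mod_cast hd.2
                have h2 : ((n / 2 : ℕ) : ℝ) ≤ (n : ℝ) / 2 := by
                  have := Nat.div_mul_le_self n 2
                  have : ((n / 2 : ℕ) : ℝ) * 2 ≤ (n : ℝ) := by exact_mod_cast this
                  linarith
                linarith
              nlinarith
      calc ∑ d ∈ Finset.Icc N (n / 2), (L d : ℝ)
          ≤ ∑ _d ∈ Finset.Icc N (n / 2), Real.exp ((C + ε₁) * (n / 2 : ℝ)) :=
            Finset.sum_le_sum hbd
        _ = (Finset.Icc N (n / 2)).card * Real.exp ((C + ε₁) * (n / 2 : ℝ)) := by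
            rw [Finset.sum_const, nsmul_eq_mul]
        _ ≤ n * Real.exp ((C + ε₁) * (n / 2 : ℝ)) := by
            apply mul_le_mul_of_nonneg_right _ (Real.exp_nonneg _)
            have hcard : (Finset.Icc N (n / 2)).card ≤ n := by
              rw [Nat.card_Icc]; omega
            exact_mod_cast hcard
    have := hFsum' n hn1
    linarith
  -- the gap δ
  set δ : ℝ := (C - ε₁) - (C + ε₁) / 2 with hδdef
  have hδ : 0 < δ := by
    rw [hδdef]
    nlinarith
  have hdecay := aux_exp_decay B δ hδ
  rw [Metric.tendsto_atTop] at hdecay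
  obtain ⟨N₂, hN₂⟩ := hdecay (1/2) (by norm_num)
  have hlog2 := tendsto_const_div_atTop_nhds_zero_nat (Real.log 2)
  rw [Metric.tendsto_atTop] at hlog2
  obtain ⟨N₃, hN₃⟩ := hlog2 (ε/2) (by linarith)
  refine ⟨max (max (2 * N) N₂) N₃, fun n hn => ?_⟩
  have hn2N : 2 * N ≤ n := le_trans (le_trans (le_max_left _ _) (le_max_left _ _)) hn
  have hnN₂ : N₂ ≤ n := le_trans (le_trans (le_max_right _ _) (le_max_left _ _)) hn
  have hnN₃ : N₃ ≤ n := le_trans (le_max_right _ _) hn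
  have hnN : N ≤ n := by omega
  have hn1 : 1 ≤ n := by omega
  have hn0 : (0:ℝ) < n := by exact_mod_cast hn1
  -- lower bound on L n
  have hLlb : Real.exp ((C - ε₁) * n) / 2 ≤ (L n : ℝ) := by
    have hcl := claim n hn2N
    have hFl := hFlb n hnN
    have hexp1 : (1:ℝ) ≤ Real.exp ((C + ε₁) * (n / 2 : ℝ)) := by
      rw [Real.one_le_exp_iff]
      positivity
    have hBn : B + n * Real.exp ((C + ε₁) * (n / 2 : ℝ))
        ≤ (B + n) * Real.exp ((C + ε₁) * (n / 2 : ℝ)) := by nlinarith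
    have hexpeq : Real.exp ((C + ε₁) * (n / 2 : ℝ))
        = Real.exp (-(δ * n)) * Real.exp ((C - ε₁) * n) := by
      rw [← Real.exp_add]
      congr 1
      rw [hδdef]; ring
    have hsm := hN₂ n hnN₂
    rw [Real.dist_eq, sub_zero, abs_lt] at hsm
    have hsm2 : (B + n) * Real.exp (-(δ * n)) < 1/2 := hsm.2
    have hepos : (0:ℝ) < Real.exp ((C - ε₁) * n) := Real.exp_pos _
    have : (B + n) * Real.exp ((C + ε₁) * (n / 2 : ℝ))
        ≤ Real.exp ((C - ε₁) * n) / 2 := by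
      rw [hexpeq, ← mul_assoc]
      nlinarith
    linarith
  have hLpos : (0:ℝ) < (L n : ℝ) := lt_of_lt_of_le (by positivity) hLlb
  rw [Real.dist_eq, abs_sub_lt_iff]
  constructor
  · -- upper: log L n / n - C < ε
    have h := hN₀ n (le_trans (le_max_left _ _) hnN)
    rw [Real.dist_eq, abs_sub_lt_iff] at h
    have hmono : Real.log (L n) ≤ Real.log (F n) :=
      Real.log_le_log hLpos (by exact_mod_cast hLF n hn1)
    have : Real.log (L n) / n ≤ Real.log (F n) / n :=
      div_le_div_of_nonneg_right hmono hn0.le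
    have h1 := h.1
    linarith
  · -- lower: C - log L n / n < ε
    have hloglb : (C - ε₁) * n - Real.log 2 ≤ Real.log (L n) := by
      have : Real.log (Real.exp ((C - ε₁) * n) / 2) ≤ Real.log (L n) :=
        Real.log_le_log (by positivity) hLlb
      rw [Real.log_div (Real.exp_ne_zero _) (by norm_num), Real.log_exp] at this
      exact this
    have h3 := hN₃ n hnN₃
    rw [Real.dist_eq, sub_zero, abs_lt] at h3
    have hdiv : (C - ε₁) - Real.log 2 / n ≤ Real.log (L n) / n := by
      have h5 : ((C - ε₁) * n - Real.log 2) / n ≤ Real.log (L n) / n :=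
        div_le_div_of_nonneg_right hloglb hn0.le
      have heq : ((C - ε₁) * n - Real.log 2) / n = (C - ε₁) - Real.log 2 / n := by
        field_simp
      linarith
    have h32 : Real.log 2 / n < ε / 2 := h3.2
    linarith


/-- For a map `T : X → X` with finitely many points of each period, and any real
`C` with `0 < C < ∞`: `(1/n) log Fₙ(T) → C` iff `(1/n) log Lₙ(T) → C`, where
`Fₙ(T)` counts points of period `n` and `Lₙ(T)` counts points of least period `n`. -/
theorem fix_least_relation {X : Type*} (T : X → X)
    (hfin : ∀ n : ℕ, 1 ≤ n → Set.Finite {x : X | T^[n] x = x})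
    (C : ℝ) (hC : 0 < C) :
    Filter.Tendsto
        (fun n : ℕ => Real.log (Nat.card {x : X | T^[n] x = x}) / n)
        Filter.atTop (nhds C) ↔
      Filter.Tendsto
        (fun n : ℕ => Real.log (Nat.card {x : X | Function.minimalPeriod T x = n}) / n)
        Filter.atTop (nhds C) := by
  constructor
  · intro hf
    exact abstract_F_to_L _ _ (card_least_le T hfin) (card_fix_le T hfin) C hC hf
  · intro hl
    exact abstract_L_to_F _ _ (card_least_le T hfin) (card_fix_le T hfin) C hC hl
end

section
/- Let (p_i)_{i≥1} be a sequence of primes with i | p_i − 1 for all i ≥ 1, and for each i let a_i be a unit of ℤ/p_iℤ of multiplicative order exactly i. Let X = Π_{i≥1} ℤ/p_iℤ and let T : X → X be given by T((x_i)_i) = (a_i·x_i)_i. Then for every n ≥ 1 the set {x ∈ X : T^n(x) = x} is finite and its cardinality equals Π_{d | n} p_d, the product over the positive divisors d of n; in particular it is at least p_n. -/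
/-- Let `(pᵢ)` be primes with `i ∣ pᵢ − 1`, and `aᵢ` a unit of `ℤ/pᵢℤ` of order
exactly `i`. Let `X = Π_{i ≥ 1} ℤ/pᵢℤ` with `T` acting coordinatewise by
multiplication by `aᵢ`. Then for every `n ≥ 1` the set `{x | Tⁿ x = x}` is finite,
its cardinality is `Π_{d ∣ n} p_d`, and in particular it is at least `pₙ`. -/
theorem product_fixed_points (p : ℕ → ℕ) (a : ∀ i, (ZMod (p i))ˣ)
    (hp : ∀ i, 1 ≤ i → (p i).Prime)
    (hd : ∀ i, 1 ≤ i → i ∣ p i - 1)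
    (ha : ∀ i, 1 ≤ i → orderOf (a i) = i)
    (T : (∀ i : {i : ℕ // 1 ≤ i}, ZMod (p i.val)) →
         (∀ i : {i : ℕ // 1 ≤ i}, ZMod (p i.val)))
    (hT : ∀ x i, T x i = (a i.val : ZMod (p i.val)) * x i) :
    ∀ n : ℕ, 1 ≤ n →
      Set.Finite {x | T^[n] x = x} ∧
      Nat.card {x | T^[n] x = x} = ∏ d ∈ n.divisors, p d ∧
      p n ≤ Nat.card {x | T^[n] x = x} := by
  intro n hn
  have hn0 : n ≠ 0 := Nat.one_le_iff_ne_zero.mp hn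
  have key : ∀ m x (i : {i : ℕ // 1 ≤ i}),
      T^[m] x i = ((a i.val ^ m : (ZMod (p i.val))ˣ) : ZMod (p i.val)) * x i := by
    intro m
    induction m with
    | zero => intro x i; simp
    | succ m ih =>
      intro x i
      rw [Function.iterate_succ_apply', hT, ih, pow_succ]
      push_cast
      ring
  have hmem : ∀ x, x ∈ {x | T^[n] x = x} ↔
      ∀ i : {i : ℕ // 1 ≤ i}, ¬ (i.val ∣ n) → x i = 0 := by
    intro x
    constructor
    · intro hx i hi
      haveI : Fact (p i.val).Prime := ⟨hp i.val i.prop⟩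
      have h1 : ((a i.val ^ n : (ZMod (p i.val))ˣ) : ZMod (p i.val)) * x i = x i := by
        rw [← key n x i]; exact congrFun hx i
      have hne : (a i.val ^ n : (ZMod (p i.val))ˣ) ≠ 1 := by
        intro h
        exact hi (by rw [← ha i.val i.prop]; exact orderOf_dvd_of_pow_eq_one h)
      have h2 : (((a i.val ^ n : (ZMod (p i.val))ˣ) : ZMod (p i.val)) - 1) * x i = 0 := by
        rw [sub_mul, one_mul, h1, sub_self]
      rcases mul_eq_zero.mp h2 with h | h
      · exact absurd (Units.ext (by simpa using sub_eq_zero.mp h)) hne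
      · exact h
    · intro hx
      funext i
      rw [key n x i]
      by_cases h : i.val ∣ n
      · have : a i.val ^ n = 1 := by
          rw [← ha i.val i.prop] at h
          exact orderOf_dvd_iff_pow_eq_one.mp h
        rw [this]; simp
      · rw [hx i h]; simp
  haveI : ∀ d : {d // d ∈ n.divisors}, NeZero (p d.val) :=
    fun d => ⟨(hp d.val (Nat.pos_of_mem_divisors d.prop)).pos.ne'⟩
  let e : {x | T^[n] x = x} ≃ ∀ d : {d // d ∈ n.divisors}, ZMod (p d.val) :=
    { toFun := fun x d => x.val ⟨d.val, Nat.pos_of_mem_divisors d.prop⟩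
      invFun := fun y => ⟨fun i => if h : i.val ∣ n then
          y ⟨i.val, Nat.mem_divisors.mpr ⟨h, hn0⟩⟩ else 0,
        (hmem _).mpr (fun i hi => by simp [hi])⟩
      left_inv := by
        intro x
        apply Subtype.ext
        funext i
        by_cases h : i.val ∣ n
        · simp only [dif_pos h]
        · simp only [dif_neg h]
          exact ((hmem x.val).mp x.prop i h).symm
      right_inv := by
        intro y
        funext d
        simp only [dif_pos (Nat.mem_divisors.mp d.prop).1] }
  have hfin : Finite {x | T^[n] x = x} := Finite.of_equiv _ e.symm
  have hcard : Nat.card {x | T^[n] x = x} = ∏ d ∈ n.divisors, p d := by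
    rw [Nat.card_congr e, Nat.card_pi]
    simp only [Nat.card_zmod]
    exact Finset.prod_coe_sort n.divisors p
  refine ⟨hfin, hcard, ?_⟩
  rw [hcard]
  exact Finset.single_le_prod' (fun i hi => (hp i (Nat.pos_of_mem_divisors hi)).one_lt.le)
    (Nat.mem_divisors_self n hn0)
end

section
/- Let X be a set, T : X → X a map such that for every n ≥ 1 the set {x ∈ X : T^n(x) = x} is finite, and C > 0 a real number. If (1/n)·log F_n(T) → C as n → ∞, then (1/n)·log L_n(T) → C as n → ∞. -/
open Filter Function Real Set

private lemma log_nat_mono {m k : ℕ} (h : m ≤ k) : Real.log m ≤ Real.log k := by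
  rcases Nat.eq_zero_or_pos m with hm | hm
  · simp [hm, Real.log_natCast_nonneg k]
  · exact Real.log_le_log (by exact_mod_cast hm) (by exact_mod_cast h)

private lemma ncard_biUnion_le {ι Y : Type*} (s : Finset ι) (f : ι → Set Y) :
    (⋃ i ∈ s, f i).ncard ≤ ∑ i ∈ s, (f i).ncard := by
  classical
  induction s using Finset.induction with
  | empty => simp
  | insert a s hns ih =>
    rw [Finset.set_biUnion_insert, Finset.sum_insert hns]
    exact le_trans (Set.ncard_union_le _ _) (by gcongr)

private lemma aux_mul_exp {b : ℝ} (hb : b < 0) :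
    Filter.Tendsto (fun n : ℕ => (n : ℝ) * Real.exp (b * n)) Filter.atTop (nhds 0) := by
  have h1 : ∀ n : ℕ, (n : ℝ) * Real.exp (b * n) = n * (Real.exp b) ^ n := by
    intro n; rw [mul_comm b (n : ℝ), Real.exp_nat_mul]
  simp only [h1]
  exact tendsto_self_mul_const_pow_of_lt_one (Real.exp_nonneg b)
    (Real.exp_lt_one_iff.mpr hb)

/-- If `(1/n) log Fₙ(T) → C > 0` then `(1/n) log Lₙ(T) → C`, for any map `T` with
finitely many points of each period. -/
theorem least_of_fix {X : Type*} (T : X → X)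
    (hfin : ∀ n : ℕ, 1 ≤ n → Set.Finite {x : X | T^[n] x = x})
    (C : ℝ) (hC : 0 < C)
    (h : Filter.Tendsto
        (fun n : ℕ => Real.log (Nat.card {x : X | T^[n] x = x}) / n)
        Filter.atTop (nhds C)) :
    Filter.Tendsto
        (fun n : ℕ => Real.log (Nat.card {x : X | Function.minimalPeriod T x = n}) / n)
        Filter.atTop (nhds C) := by
  classical
  set F : ℕ → ℕ := fun n => Nat.card {x : X | T^[n] x = x} with hFdef
  set L : ℕ → ℕ := fun n => Nat.card {x : X | Function.minimalPeriod T x = n} with hLdef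
  -- combinatorial part
  have hLsubF : ∀ n : ℕ, 1 ≤ n →
      {x : X | Function.minimalPeriod T x = n} ⊆ {x : X | T^[n] x = x} := by
    intro n hn x hx
    have h1 := Function.isPeriodicPt_minimalPeriod T x
    rw [hx] at h1
    exact h1
  have hLF : ∀ n : ℕ, 1 ≤ n → L n ≤ F n := by
    intro n hn
    simp only [hLdef, hFdef, Nat.card_coe_set_eq]
    exact Set.ncard_le_ncard (hLsubF n hn) (hfin n hn)
  set B : ℕ → ℕ := fun n => ∑ d ∈ Finset.Icc 1 (n / 2), F d with hBdef
  have hPD : ∀ n : ℕ, n.properDivisors ⊆ Finset.Icc 1 (n / 2) := by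
    intro n d hd
    obtain ⟨hdvd, hlt⟩ := Nat.mem_properDivisors.mp hd
    obtain ⟨k, hk⟩ := hdvd
    have hd0 : 0 < d := by
      rcases Nat.eq_zero_or_pos d with h0 | h0
      · subst h0; simp at hk; omega
      · exact h0
    have hk2 : 2 ≤ k := by nlinarith
    refine Finset.mem_Icc.mpr ⟨hd0, ?_⟩
    rw [Nat.le_div_iff_mul_le (by norm_num)]
    nlinarith
  have hkey : ∀ n : ℕ, 1 ≤ n → F n ≤ L n + B n := by
    intro n hn
    have hsub : {x : X | T^[n] x = x} ⊆
        {x : X | Function.minimalPeriod T x = n} ∪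
          ⋃ d ∈ n.properDivisors, {x : X | T^[d] x = x} := by
      intro x hx
      have hper : Function.IsPeriodicPt T n x := hx
      have hdvd : Function.minimalPeriod T x ∣ n := hper.minimalPeriod_dvd
      by_cases hcase : Function.minimalPeriod T x = n
      · exact Or.inl hcase
      · refine Or.inr (Set.mem_iUnion₂.mpr ⟨Function.minimalPeriod T x, ?_, ?_⟩)
        · exact Nat.mem_properDivisors.mpr
            ⟨hdvd, lt_of_le_of_ne (Nat.le_of_dvd hn hdvd) hcase⟩
        · exact Function.isPeriodicPt_minimalPeriod T x
    have hfinU : (⋃ d ∈ n.properDivisors, {x : X | T^[d] x = x}).Finite := by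
      refine Set.Finite.biUnion (Finset.finite_toSet _) fun d hd => ?_
      exact hfin d (Nat.pos_of_mem_properDivisors (by simpa using hd))
    have hfinL : {x : X | Function.minimalPeriod T x = n}.Finite :=
      (hfin n hn).subset (hLsubF n hn)
    calc F n = {x : X | T^[n] x = x}.ncard := Nat.card_coe_set_eq _
      _ ≤ ({x : X | Function.minimalPeriod T x = n} ∪
            ⋃ d ∈ n.properDivisors, {x : X | T^[d] x = x}).ncard :=
        Set.ncard_le_ncard hsub (hfinL.union hfinU)
      _ ≤ {x : X | Function.minimalPeriod T x = n}.ncard +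
            (⋃ d ∈ n.properDivisors, {x : X | T^[d] x = x}).ncard :=
        Set.ncard_union_le _ _
      _ ≤ L n + ∑ d ∈ n.properDivisors, {x : X | T^[d] x = x}.ncard := by
        rw [hLdef]; simp only [Nat.card_coe_set_eq]
        exact Nat.add_le_add_left (ncard_biUnion_le _ _) _
      _ = L n + ∑ d ∈ n.properDivisors, F d := by
        simp only [hFdef, Nat.card_coe_set_eq]
      _ ≤ L n + B n := by
        exact Nat.add_le_add_left (Finset.sum_le_sum_of_subset (hPD n)) _
  -- analytic part
  have h8 : (0 : ℝ) < C / 8 := by positivity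
  have h1 : ∀ᶠ n : ℕ in atTop, |Real.log (F n) / n - C| < C / 8 := by
    filter_upwards [h (Metric.ball_mem_nhds C h8)] with n hn
    simpa [Real.dist_eq, hFdef] using hn
  obtain ⟨N0, hN0⟩ := eventually_atTop.mp h1
  set N : ℕ := max N0 1 with hNdef
  have hFlow : ∀ n : ℕ, N ≤ n → Real.exp (7 * C / 8 * n) ≤ (F n : ℝ) := by
    intro n hn
    have hn1 : 1 ≤ n := le_trans (le_max_right _ _) hn
    have habs := abs_lt.mp (hN0 n (le_trans (le_max_left _ _) hn))
    have hnpos : (0 : ℝ) < n := by exact_mod_cast hn1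
    have hlog : 7 * C / 8 * n ≤ Real.log (F n) := by
      rw [← le_div_iff₀ hnpos]; linarith [habs.1]
    have hFpos : (0 : ℝ) < (F n : ℝ) := by
      rcases Nat.eq_zero_or_pos (F n) with h0 | h0
      · rw [h0] at hlog; norm_num [Real.log_zero] at hlog; nlinarith
      · exact_mod_cast h0
    calc Real.exp (7 * C / 8 * n) ≤ Real.exp (Real.log (F n)) :=
          Real.exp_le_exp.mpr hlog
      _ = (F n : ℝ) := Real.exp_log hFpos
  have hFup : ∀ d : ℕ, N ≤ d → (F d : ℝ) ≤ Real.exp (9 * C / 8 * d) := by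
    intro d hd
    have hd1 : 1 ≤ d := le_trans (le_max_right _ _) hd
    have habs := abs_lt.mp (hN0 d (le_trans (le_max_left _ _) hd))
    have hdpos : (0 : ℝ) < d := by exact_mod_cast hd1
    rcases Nat.eq_zero_or_pos (F d) with h0 | h0
    · rw [h0]; exact_mod_cast (Real.exp_pos _).le
    · have hFpos : (0 : ℝ) < (F d : ℝ) := by exact_mod_cast h0
      have hlog : Real.log (F d) ≤ 9 * C / 8 * d := by
        rw [← div_le_iff₀ hdpos] at *; linarith [habs.2]
      exact (Real.log_le_iff_le_exp hFpos).mp hlog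
  set Knat : ℕ := (Finset.range N).sup F with hKnatdef
  set K : ℝ := (Knat : ℝ) with hKdef
  have hK0 : 0 ≤ K := Nat.cast_nonneg _
  have hterm : ∀ n : ℕ, ∀ d ∈ Finset.Icc 1 (n / 2),
      (F d : ℝ) ≤ K + Real.exp (9 * C / 8 * ((n : ℝ) / 2)) := by
    intro n d hd
    obtain ⟨hd1, hd2⟩ := Finset.mem_Icc.mp hd
    have hexp0 : (0 : ℝ) < Real.exp (9 * C / 8 * ((n : ℝ) / 2)) := Real.exp_pos _
    by_cases hdN : d < N
    · have hle : F d ≤ (Finset.range N).sup F :=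
        Finset.le_sup (Finset.mem_range.mpr hdN)
      have : (F d : ℝ) ≤ K := by rw [hKdef]; exact_mod_cast hle
      linarith
    · push_neg at hdN
      have hb1 := hFup d hdN
      have hdle : (d : ℝ) ≤ (n : ℝ) / 2 := by
        calc (d : ℝ) ≤ ((n / 2 : ℕ) : ℝ) := by exact_mod_cast hd2
          _ ≤ (n : ℝ) / 2 := by exact_mod_cast Nat.cast_div_le
      have : Real.exp (9 * C / 8 * d) ≤ Real.exp (9 * C / 8 * ((n : ℝ) / 2)) :=
        Real.exp_le_exp.mpr (by nlinarith)
      linarith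
  have hBbound : ∀ n : ℕ,
      (B n : ℝ) ≤ n * (K + Real.exp (9 * C / 8 * ((n : ℝ) / 2))) := by
    intro n
    have h1 : (B n : ℝ) = ∑ d ∈ Finset.Icc 1 (n / 2), (F d : ℝ) := by
      rw [hBdef]; push_cast; ring
    rw [h1]
    have hcard : ((Finset.Icc 1 (n / 2)).card : ℝ) ≤ (n : ℝ) := by
      have : (Finset.Icc 1 (n / 2)).card ≤ n := by
        rw [Nat.card_Icc]; omega
      exact_mod_cast this
    calc ∑ d ∈ Finset.Icc 1 (n / 2), (F d : ℝ)
        ≤ ∑ _d ∈ Finset.Icc 1 (n / 2),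
            (K + Real.exp (9 * C / 8 * ((n : ℝ) / 2))) :=
          Finset.sum_le_sum (hterm n)
      _ = ((Finset.Icc 1 (n / 2)).card : ℝ) *
            (K + Real.exp (9 * C / 8 * ((n : ℝ) / 2))) := by
          rw [Finset.sum_const, nsmul_eq_mul]
      _ ≤ (n : ℝ) * (K + Real.exp (9 * C / 8 * ((n : ℝ) / 2))) := by
          apply mul_le_mul_of_nonneg_right hcard
          positivity
  have htend : Tendsto (fun n : ℕ =>
      (n : ℝ) * (K + Real.exp (9 * C / 8 * ((n : ℝ) / 2))) /
        Real.exp (7 * C / 8 * n)) atTop (nhds 0) := by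
    have heq : ∀ n : ℕ,
        (n : ℝ) * (K + Real.exp (9 * C / 8 * ((n : ℝ) / 2))) /
          Real.exp (7 * C / 8 * n)
        = K * ((n : ℝ) * Real.exp (-(7 * C / 8) * n)) +
          (n : ℝ) * Real.exp ((9 * C / 16 - 7 * C / 8) * n) := by
      intro n
      have e1 : Real.exp (9 * C / 8 * ((n : ℝ) / 2)) / Real.exp (7 * C / 8 * n)
          = Real.exp ((9 * C / 16 - 7 * C / 8) * n) := by
        rw [← Real.exp_sub]; congr 1; ring
      have e2 : (Real.exp (7 * C / 8 * n))⁻¹ = Real.exp (-(7 * C / 8) * n) := by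
        rw [← Real.exp_neg]; congr 1; ring
      calc (n : ℝ) * (K + Real.exp (9 * C / 8 * ((n : ℝ) / 2))) /
            Real.exp (7 * C / 8 * n)
          = K * ((n : ℝ) * (Real.exp (7 * C / 8 * n))⁻¹) +
            (n : ℝ) * (Real.exp (9 * C / 8 * ((n : ℝ) / 2)) /
              Real.exp (7 * C / 8 * n)) := by
            field_simp
        _ = _ := by rw [e1, e2]
    simp only [heq]
    have t1 := (aux_mul_exp (show -(7 * C / 8) < 0 by linarith)).const_mul K
    have t2 := aux_mul_exp (show 9 * C / 16 - 7 * C / 8 < 0 by linarith)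
    simpa using t1.add t2
  have heps : ∀ᶠ n : ℕ in atTop,
      (n : ℝ) * (K + Real.exp (9 * C / 8 * ((n : ℝ) / 2)))
        ≤ (1 / 2) * Real.exp (7 * C / 8 * n) := by
    filter_upwards [htend.eventually (gt_mem_nhds (by norm_num : (0 : ℝ) < 1 / 2))]
      with n hn
    rw [div_lt_iff₀ (Real.exp_pos _)] at hn
    linarith
  have hhalf : ∀ᶠ n : ℕ in atTop, (F n : ℝ) / 2 ≤ (L n : ℝ) := by
    filter_upwards [heps, eventually_ge_atTop N] with n h1 h2
    have hn1 : 1 ≤ n := le_trans (le_max_right _ _) h2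
    have hkey' : (F n : ℝ) ≤ (L n : ℝ) + (B n : ℝ) := by
      exact_mod_cast hkey n hn1
    have hBle : (B n : ℝ) ≤ (1 / 2) * (F n : ℝ) := by
      have := hFlow n h2
      have := hBbound n
      linarith
    linarith
  -- squeeze
  have hupper : ∀ᶠ n : ℕ in atTop,
      Real.log (L n) / n ≤ Real.log (F n) / n := by
    filter_upwards [eventually_ge_atTop 1] with n hn
    have hmono := log_nat_mono (hLF n hn)
    have hnpos : (0 : ℝ) < n := by exact_mod_cast hn
    exact div_le_div_of_nonneg_right hmono hnpos.le |>.trans_eq rfl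
  have hlower : ∀ᶠ n : ℕ in atTop,
      (Real.log (F n) - Real.log 2) / n ≤ Real.log (L n) / n := by
    filter_upwards [hhalf, eventually_ge_atTop N] with n h1 h2
    have hn1 : 1 ≤ n := le_trans (le_max_right _ _) h2
    have hnpos : (0 : ℝ) < n := by exact_mod_cast hn1
    have hFpos : (0 : ℝ) < (F n : ℝ) :=
      lt_of_lt_of_le (Real.exp_pos _) (hFlow n h2)
    have hhalfpos : (0 : ℝ) < (F n : ℝ) / 2 := by positivity
    have hl : Real.log ((F n : ℝ) / 2) ≤ Real.log (L n) :=
      Real.log_le_log hhalfpos h1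
    rw [Real.log_div (ne_of_gt hFpos) two_ne_zero] at hl
    exact div_le_div_of_nonneg_right hl hnpos.le |>.trans_eq rfl
  have hlowt : Tendsto (fun n : ℕ => (Real.log (F n) - Real.log 2) / n)
      atTop (nhds C) := by
    have heq2 : (fun n : ℕ => (Real.log (F n) - Real.log 2) / n)
        = fun n : ℕ => Real.log (F n) / n - Real.log 2 / n := by
      funext n; ring
    rw [heq2]
    simpa [hFdef] using h.sub (tendsto_const_div_atTop_nhds_zero_nat (Real.log 2))
  exact tendsto_of_tendsto_of_tendsto_of_le_of_le' hlowt h hlower hupper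
end
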